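/- Let V be a real inner product space of dimension 4n with an orthogonal complex structure J, and let W ⊆ V be a subspace of dimension 2m with m ≤ n. Then: (i) for every real number c with 0 ≤ c < 1, dim ker(T_W ∘ T_W + c²·id_W) = dim ker(T_{W⊥} ∘ T_{W⊥} + c²·id_{W⊥}); that is, W and its orthogonal complement W⊥ have the same Kähler angles in (0, π/2], with the same multiplicities. (ii) dim(W⊥ ∩ J(W⊥)) − dim(W ∩ J(W)) = 4n − 4m; that is, only the angle 0 (complex directions) may occur with different multiplicities in W and W⊥. -/

import Mathlib

/-!
STATEMENT 1: `V` of dimension `4n` with orthogonal complex structure `J`, `W` of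
dimension `2m`, `m ≤ n`. Then:
(i) for every `0 ≤ c < 1`, `dim ker (T_W² + c²·id) = dim ker (T_{W⊥}² + c²·id)`
    (same Kähler angles in (0, π/2] with multiplicities);
(ii) `dim (W⊥ ∩ J W⊥) − dim (W ∩ J W) = 4n − 4m`.
-/

open scoped RealInnerProductSpace

noncomputable section

variable {V : Type*} [NormedAddCommGroup V] [InnerProductSpace ℝ V] [FiniteDimensional ℝ V]

/-- `T_U = P_U ∘ J` restricted to the subspace `U`, as a linear endomorphism of `U`. -/
noncomputable def TL (J : V →ₗ[ℝ] V) (U : Submodule ℝ V) : U →ₗ[ℝ] U :=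
  (Submodule.orthogonalProjectionOnto U).toLinearMap ∘ₗ J ∘ₗ U.subtype

/-- The cross map `P_{U₂} ∘ J` restricted to `U₁`. -/
noncomputable def AB (J : V →ₗ[ℝ] V) (U₁ U₂ : Submodule ℝ V) : U₁ →ₗ[ℝ] U₂ :=
  (Submodule.orthogonalProjectionOnto U₂).toLinearMap ∘ₗ J ∘ₗ U₁.subtype

variable {J : V →ₗ[ℝ] V} {U₁ U₂ : Submodule ℝ V}


lemma keyP (hJsq : ∀ x : V, J (J x) = -x)
    (hsum : ∀ v : V, ((Submodule.orthogonalProjectionOnto U₁ v : V) + (Submodule.orthogonalProjectionOnto U₂ v : V) = v))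
    (U₃ : Submodule ℝ V) (x : U₁) :
    ((Submodule.orthogonalProjectionOnto U₃ (J ((Submodule.orthogonalProjectionOnto U₁ (J (x:V)) : V))) : V) +
     (Submodule.orthogonalProjectionOnto U₃ (J ((Submodule.orthogonalProjectionOnto U₂ (J (x:V)) : V))) : V)) =
    -((Submodule.orthogonalProjectionOnto U₃ (x : V) : V)) := by
  rw [← Submodule.coe_add, ← map_add, ← map_add, hsum, hJsq, map_neg, Submodule.coe_neg]

lemma key1 (hJsq : ∀ x : V, J (J x) = -x)
    (hsum : ∀ v : V, ((Submodule.orthogonalProjectionOnto U₁ v : V) + (Submodule.orthogonalProjectionOnto U₂ v : V) = v))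
    (x : U₁) :
    ((TL J U₁ (TL J U₁ x) : V)) + ((AB J U₂ U₁ (AB J U₁ U₂ x)) : V) = -(x : V) := by
  have h := keyP (U₂ := U₂) hJsq hsum U₁ x
  simp only [TL, AB, LinearMap.comp_apply, ContinuousLinearMap.coe_coe, Submodule.subtype_apply]
    at h ⊢
  rw [h, Submodule.orthogonalProjectionOnto_mem_subspace_eq_self]

lemma key2 (hJsq : ∀ x : V, J (J x) = -x)
    (hsum : ∀ v : V, ((Submodule.orthogonalProjectionOnto U₁ v : V) + (Submodule.orthogonalProjectionOnto U₂ v : V) = v))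
    (x : U₁) :
    ((AB J U₁ U₂ (TL J U₁ x) : V)) + ((TL J U₂ (AB J U₁ U₂ x)) : V) = 0 := by
  have h := keyP (U₂ := U₂) hJsq hsum U₂ x
  have h0 : ((Submodule.orthogonalProjectionOnto U₂ (x : V) : V)) = 0 := by
    have h1 := hsum (x : V)
    rw [Submodule.orthogonalProjectionOnto_mem_subspace_eq_self] at h1
    exact add_eq_left.mp h1
  simp only [TL, AB, LinearMap.comp_apply, ContinuousLinearMap.coe_coe, Submodule.subtype_apply]
    at h ⊢
  rw [h, h0, neg_zero]



lemma mem_kerT {c : ℝ} {U : Submodule ℝ V} (x : U) :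
    x ∈ LinearMap.ker (TL J U ∘ₗ TL J U + c ^ 2 • LinearMap.id) ↔
      TL J U (TL J U x) = -(c ^ 2 • x) := by
  simp only [LinearMap.mem_ker, LinearMap.add_apply, LinearMap.comp_apply,
    LinearMap.smul_apply, LinearMap.id_apply]
  exact add_eq_zero_iff_eq_neg

lemma swapTL (hJsq : ∀ x : V, J (J x) = -x)
    (hsum : ∀ v : V, ((Submodule.orthogonalProjectionOnto U₁ v : V) + (Submodule.orthogonalProjectionOnto U₂ v : V) = v))
    (z : U₁) : TL J U₂ (AB J U₁ U₂ z) = - AB J U₁ U₂ (TL J U₁ z) := by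
  have h := key2 hJsq hsum z
  apply Subtype.coe_injective
  show ((TL J U₂ (AB J U₁ U₂ z) : V)) = ((- AB J U₁ U₂ (TL J U₁ z) : U₂) : V)
  rw [Submodule.coe_neg]
  exact eq_neg_of_add_eq_zero_right h

lemma ker_le (hJsq : ∀ x : V, J (J x) = -x)
    (hsum : ∀ v : V, ((Submodule.orthogonalProjectionOnto U₁ v : V) + (Submodule.orthogonalProjectionOnto U₂ v : V) = v))
    {c : ℝ} (hc : c ^ 2 ≠ 1) :
    Module.finrank ℝ (LinearMap.ker (TL J U₁ ∘ₗ TL J U₁ + c ^ 2 • LinearMap.id)) ≤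
      Module.finrank ℝ (LinearMap.ker (TL J U₂ ∘ₗ TL J U₂ + c ^ 2 • LinearMap.id)) := by
  have hmaps : ∀ x ∈ LinearMap.ker (TL J U₁ ∘ₗ TL J U₁ + c ^ 2 • LinearMap.id),
      AB J U₁ U₂ x ∈ LinearMap.ker (TL J U₂ ∘ₗ TL J U₂ + c ^ 2 • LinearMap.id) := by
    intro x hx
    rw [mem_kerT] at hx ⊢
    rw [swapTL hJsq hsum, map_neg, swapTL hJsq hsum, neg_neg, hx, map_neg, map_smul]
  set f := (AB J U₁ U₂).restrict hmaps with hf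
  have hinj : Function.Injective f := by
    rw [injective_iff_map_eq_zero]
    intro x hx0
    have hA : AB J U₁ U₂ (x : U₁) = 0 := by
      have := congrArg (Subtype.val) hx0
      simpa [hf, LinearMap.restrict_apply] using this
    have hk := (mem_kerT (J := J) (c := c) (x : U₁)).mp x.2
    have h1 := key1 hJsq hsum (x : U₁)
    rw [hA, hk] at h1
    simp only [map_zero, Submodule.coe_zero, add_zero, Submodule.coe_neg,
      Submodule.coe_smul, neg_inj] at h1
    -- h1 : c ^ 2 • ((x : U₁) : V) = ((x : U₁) : V)
    have hx1 : ((c ^ 2 - 1) : ℝ) • ((x : U₁) : V) = 0 := by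
      rw [sub_smul, one_smul, h1, sub_self]
    rcases smul_eq_zero.mp hx1 with h | h
    · exact absurd (by linarith : c ^ 2 = 1) hc
    · have : ((x : U₁) : V) = ((0 : U₁) : V) := by simpa using h
      have : (x : U₁) = 0 := Subtype.coe_injective this
      exact Subtype.coe_injective this
  exact LinearMap.finrank_le_finrank_of_injective hinj

lemma finrank_ker_AB (hJsq : ∀ x : V, J (J x) = -x)
    (hker : ∀ x : U₁, (AB J U₁ U₂ x = 0 ↔ J (x : V) ∈ U₁)) :
    Module.finrank ℝ (LinearMap.ker (AB J U₁ U₂)) =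
      Module.finrank ℝ ↥(U₁ ⊓ U₁.map J) := by
  have heq : LinearMap.ker (AB J U₁ U₂) = (U₁ ⊓ U₁.map J).comap U₁.subtype := by
    ext x
    rw [LinearMap.mem_ker, hker x, Submodule.mem_comap, Submodule.mem_inf]
    constructor
    · intro h
      exact ⟨x.2, ⟨-(J (x : V)), U₁.neg_mem h, by rw [Submodule.subtype_apply, map_neg, hJsq, neg_neg]⟩⟩
    · rintro ⟨-, w, hw, hwx⟩
      rw [Submodule.subtype_apply] at hwx
      rw [← hwx, hJsq]
      exact U₁.neg_mem hw
  rw [heq]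
  exact (Submodule.comapSubtypeEquivOfLe inf_le_left).finrank_eq

lemma innerAB (hJorth : ∀ x y : V, ⟪J x, J y⟫ = ⟪x, y⟫)
    (hJsq : ∀ x : V, J (J x) = -x) (x : U₁) (y : U₂) :
    ⟪((AB J U₁ U₂ x : V)), (y : V)⟫ = -⟪(x : V), ((AB J U₂ U₁ y : V))⟫ := by
  have h1 : ⟪((AB J U₁ U₂ x : V)), (y : V)⟫ = ⟪J (x : V), (y : V)⟫ := by
    have h := Submodule.starProjection_inner_eq_zero (K := U₂) (J (x : V)) (y : V) y.2
    rw [inner_sub_left, sub_eq_zero] at h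
    simp only [AB, LinearMap.comp_apply, ContinuousLinearMap.coe_coe, Submodule.subtype_apply]
    exact h.symm
  have h2 : ⟪(x : V), ((AB J U₂ U₁ y : V))⟫ = ⟪(x : V), J (y : V)⟫ := by
    have h := Submodule.starProjection_inner_eq_zero (K := U₁) (J (y : V)) (x : V) x.2
    rw [inner_sub_left, sub_eq_zero, Submodule.starProjection_apply] at h
    simp only [AB, LinearMap.comp_apply, ContinuousLinearMap.coe_coe, Submodule.subtype_apply]
    rw [real_inner_comm, ← h, real_inner_comm]
  have hy : J (-(J (y : V))) = (y : V) := by rw [map_neg, hJsq, neg_neg]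
  rw [h1, h2, ← hy, hJorth, inner_neg_right, hy]

lemma ker_eq_orthRange (hJorth : ∀ x y : V, ⟪J x, J y⟫ = ⟪x, y⟫)
    (hJsq : ∀ x : V, J (J x) = -x) :
    LinearMap.ker (AB J U₁ U₂) = (LinearMap.range (AB J U₂ U₁))ᗮ := by
  ext x
  rw [LinearMap.mem_ker, Submodule.mem_orthogonal]
  constructor
  · rintro h u ⟨y, rfl⟩
    have hi := innerAB hJorth hJsq x y
    rw [h, Submodule.coe_zero, inner_zero_left] at hi
    rw [Submodule.coe_inner, real_inner_comm, ← neg_eq_zero, ← hi]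
  · intro h
    have h0 := h _ ⟨AB J U₁ U₂ x, rfl⟩
    rw [Submodule.coe_inner, real_inner_comm] at h0
    have hi := innerAB hJorth hJsq x (AB J U₁ U₂ x)
    rw [h0, neg_zero] at hi
    have := inner_self_eq_zero (𝕜 := ℝ).mp hi
    exact Subtype.coe_injective (by simpa using this)

theorem stmt_1 (n m : ℕ) (hnm : m ≤ n) (J : V →ₗ[ℝ] V)
    (hJorth : ∀ x y : V, ⟪J x, J y⟫ = ⟪x, y⟫)
    (hJsq : ∀ x : V, J (J x) = -x)
    (hV : Module.finrank ℝ V = 4 * n)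
    (W : Submodule ℝ V) (hW : Module.finrank ℝ W = 2 * m) :
    (∀ c : ℝ, 0 ≤ c → c < 1 →
      Module.finrank ℝ (LinearMap.ker (TL J W ∘ₗ TL J W + c ^ 2 • LinearMap.id)) =
      Module.finrank ℝ (LinearMap.ker (TL J Wᗮ ∘ₗ TL J Wᗮ + c ^ 2 • LinearMap.id))) ∧
    Module.finrank ℝ ↥(Wᗮ ⊓ Wᗮ.map J) =
      Module.finrank ℝ ↥(W ⊓ W.map J) + (4 * n - 4 * m) := by
  have hsum12 : ∀ v : V,
      ((Submodule.orthogonalProjectionOnto W v : V) + (Submodule.orthogonalProjectionOnto Wᗮ v : V) = v) :=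
    fun v => W.starProjection_add_starProjection_orthogonal v
  have hsum21 : ∀ v : V,
      ((Submodule.orthogonalProjectionOnto Wᗮ v : V) + (Submodule.orthogonalProjectionOnto W v : V) = v) := by
    intro v; rw [add_comm]; exact hsum12 v
  constructor
  · intro c hc0 hc1
    have hc : c ^ 2 ≠ 1 := by nlinarith
    exact le_antisymm (ker_le hJsq hsum12 hc) (ker_le hJsq hsum21 hc)
  · have hkerA : ∀ x : W, (AB J W Wᗮ x = 0 ↔ J (x : V) ∈ W) := by
      intro x
      have : AB J W Wᗮ x = Submodule.orthogonalProjectionOnto Wᗮ (J (x : V)) := rfl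
      rw [this, Submodule.orthogonalProjectionOnto_eq_zero_iff, Submodule.orthogonal_orthogonal]
    have hkerB : ∀ y : Wᗮ, (AB J Wᗮ W y = 0 ↔ J (y : V) ∈ Wᗮ) := by
      intro y
      have : AB J Wᗮ W y = Submodule.orthogonalProjectionOnto W (J (y : V)) := rfl
      rw [this, Submodule.orthogonalProjectionOnto_eq_zero_iff]
    have f1 := finrank_ker_AB (U₂ := Wᗮ) hJsq hkerA
    have f2 := finrank_ker_AB (U₂ := W) hJsq hkerB
    have r1 : LinearMap.ker (AB J W Wᗮ) = (LinearMap.range (AB J Wᗮ W))ᗮ :=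
      ker_eq_orthRange hJorth hJsq
    have r2 : LinearMap.ker (AB J Wᗮ W) = (LinearMap.range (AB J W Wᗮ))ᗮ :=
      ker_eq_orthRange hJorth hJsq
    have c1 := LinearMap.finrank_range_add_finrank_ker (AB J W Wᗮ)
    have c2 := LinearMap.finrank_range_add_finrank_ker (AB J Wᗮ W)
    have c3 := Submodule.finrank_add_finrank_orthogonal (LinearMap.range (AB J Wᗮ W))
    have c4 := Submodule.finrank_add_finrank_orthogonal (LinearMap.range (AB J W Wᗮ))
    have c5 := Submodule.finrank_add_finrank_orthogonal W
    rw [r1] at c1 f1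
    rw [r2] at c2 f2
    rw [hW] at c5
    rw [hV] at c5
    omega

end
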